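/- The origin is a globally asymptotically stable equilibrium of the closed-loop quadrotor angular dynamics ẋ₁ = x₂, ẋ₂ = −1.5·x₄x₆ − 0.5·x₄·sin(x₂)cos(x₄) − x₁ − 2.5·x₂, ẋ₃ = x₄, ẋ₄ = 1.5·x₂x₆ + 0.5·x₂·sin(x₂)cos(x₄) − x₃ − 10·x₄, ẋ₅ = x₆, ẋ₆ = −x₅ − 0.8·x₆: the origin is stable, and every solution x : [0,∞) → ℝ⁶ satisfies x(t) → 0 as t → ∞. -/

import Mathlib

noncomputable def quadrotorField (x : EuclideanSpace ℝ (Fin 6)) :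
    EuclideanSpace ℝ (Fin 6) :=
  WithLp.toLp 2 ![x 1,
    -1.5 * x 3 * x 5 - 0.5 * x 3 * Real.sin (x 1) * Real.cos (x 3)
      - x 0 - 2.5 * x 1,
    x 3,
    1.5 * x 1 * x 5 + 0.5 * x 1 * Real.sin (x 1) * Real.cos (x 3)
      - x 2 - 10 * x 3,
    x 5,
    -x 4 - 0.8 * x 5]

section helpers

lemma quadField0 (y : EuclideanSpace ℝ (Fin 6)) : quadrotorField y 0 = y 1 := by
  simp [quadrotorField]
lemma quadField1 (y : EuclideanSpace ℝ (Fin 6)) : quadrotorField y 1 =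
    -1.5 * y 3 * y 5 - 0.5 * y 3 * Real.sin (y 1) * Real.cos (y 3) - y 0 - 2.5 * y 1 := by
  simp [quadrotorField]
lemma quadField2 (y : EuclideanSpace ℝ (Fin 6)) : quadrotorField y 2 = y 3 := by
  simp [quadrotorField]
lemma quadField3 (y : EuclideanSpace ℝ (Fin 6)) : quadrotorField y 3 =
    1.5 * y 1 * y 5 + 0.5 * y 1 * Real.sin (y 1) * Real.cos (y 3) - y 2 - 10 * y 3 := by
  simp [quadrotorField]
lemma quadField4 (y : EuclideanSpace ℝ (Fin 6)) : quadrotorField y 4 = y 5 := by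
  simp [quadrotorField]
lemma quadField5 (y : EuclideanSpace ℝ (Fin 6)) : quadrotorField y 5 = -y 4 - 0.8 * y 5 := rfl

/-- If `f' ≤ 0` on `[0,∞)`, then `f t ≤ f 0` for `t ≥ 0`. -/
lemma decay_of_deriv_nonpos {f f' : ℝ → ℝ}
    (hf : ∀ t ≥ (0:ℝ), HasDerivAt f (f' t) t)
    (h : ∀ t ≥ (0:ℝ), f' t ≤ 0) : ∀ t ≥ (0:ℝ), f t ≤ f 0 := by
  have hanti : AntitoneOn f (Set.Ici (0:ℝ)) := by
    apply antitoneOn_of_deriv_nonpos (convex_Ici 0)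
    · exact fun t ht => (hf t ht).continuousAt.continuousWithinAt
    · intro t ht
      rw [interior_Ici] at ht
      exact (hf t (le_of_lt ht)).differentiableAt.differentiableWithinAt
    · intro t ht
      rw [interior_Ici] at ht
      rw [(hf t (le_of_lt ht)).deriv]
      exact h t (le_of_lt ht)
  exact fun t ht => hanti (Set.self_mem_Ici) ht ht

/-- Exponential decay from a linear differential inequality. -/
lemma exp_decay {W W' : ℝ → ℝ} {k : ℝ}
    (hW : ∀ t ≥ (0:ℝ), HasDerivAt W (W' t) t)
    (h : ∀ t ≥ (0:ℝ), W' t ≤ -k * W t) :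
    ∀ t ≥ (0:ℝ), W t ≤ W 0 * Real.exp (-k * t) := by
  set g : ℝ → ℝ := fun t => W t * Real.exp (k * t) with hg
  have hg' : ∀ t ≥ (0:ℝ), HasDerivAt g ((W' t + k * W t) * Real.exp (k * t)) t := by
    intro t ht
    have h1 : HasDerivAt (fun s : ℝ => Real.exp (k * s)) (k * Real.exp (k * t)) t := by
      exact ((Real.hasDerivAt_exp (k*t)).comp t ((hasDerivAt_id t).const_mul k)).congr_deriv (by ring)
    have := (hW t ht).mul h1
    refine this.congr_deriv ?_
    ring
  have hle : ∀ t ≥ (0:ℝ), g t ≤ g 0 := by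
    apply decay_of_deriv_nonpos hg'
    intro t ht
    have h2 : W' t + k * W t ≤ 0 := by have := h t ht; linarith
    exact mul_nonpos_of_nonpos_of_nonneg h2 (Real.exp_nonneg _)
  intro t ht
  have h5 := hle t ht
  have h3 : g 0 = W 0 := by simp [hg]
  rw [h3] at h5
  have h4 : W t = g t * Real.exp (-k * t) := by
    simp only [hg]
    rw [mul_assoc, ← Real.exp_add]
    simp
  rw [h4, neg_mul]
  exact mul_le_mul_of_nonneg_right h5 (Real.exp_nonneg _)

/-- Key pointwise inequality: the derivative of the cross term is controlled. -/
lemma cross_bound (R x0 x1 x2 x3 x4 x5 S : ℝ)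
    (h0 : |x0| ≤ R) (h2 : |x2| ≤ R) (hS : |S| ≤ 1) :
    x1^2 + x0*(-1.5*x3*x5 - 0.5*x3*S - x0 - 2.5*x1)
    + x3^2 + x2*(1.5*x1*x5 + 0.5*x1*S - x2 - 10*x3)
    + x5^2 + x4*(-x4 - 0.8*x5)
    ≤ -(1/4)*(x0^2+x2^2+x4^2) + (8+R)*x1^2 + (102+R)*x3^2 + (2+2*R)*x5^2 := by
  have hR : (0:ℝ) ≤ R := le_trans (abs_nonneg _) h0
  have h0l := abs_le.mp h0
  have h2l := abs_le.mp h2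
  have hSl := abs_le.mp hS
  have e1 : -2.5*(x0*x1) ≤ (1/4)*x0^2 + 6.25*x1^2 := by linarith [sq_nonneg (x0/2 + 2.5*x1)]
  have e2 : -10*(x2*x3) ≤ (1/4)*x2^2 + 100*x3^2 := by linarith [sq_nonneg (x2/2 + 10*x3)]
  have e3 : -0.8*(x4*x5) ≤ (1/4)*x4^2 + 0.64*x5^2 := by linarith [sq_nonneg (x4/2 + 0.8*x5)]
  have e4 : -1.5*(x0*x3*x5) ≤ 0.75*R*(x3^2+x5^2) := by
    linarith [mul_nonneg (by linarith : (0:ℝ) ≤ R - x0) (sq_nonneg (x3 - x5)),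
               mul_nonneg (by linarith : (0:ℝ) ≤ R + x0) (sq_nonneg (x3 + x5))]
  have e5 : 1.5*(x2*x1*x5) ≤ 0.75*R*(x1^2+x5^2) := by
    linarith [mul_nonneg (by linarith : (0:ℝ) ≤ R - x2) (sq_nonneg (x1 + x5)),
               mul_nonneg (by linarith : (0:ℝ) ≤ R + x2) (sq_nonneg (x1 - x5))]
  have e6 : -0.5*(x0*x3*S) ≤ 0.25*(x0^2+x3^2) := by
    linarith [mul_nonneg (by linarith : (0:ℝ) ≤ 1 - S) (sq_nonneg (x0 - x3)),
               mul_nonneg (by linarith : (0:ℝ) ≤ 1 + S) (sq_nonneg (x0 + x3))]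
  have e7 : 0.5*(x2*x1*S) ≤ 0.25*(x1^2+x2^2) := by
    linarith [mul_nonneg (by linarith : (0:ℝ) ≤ 1 - S) (sq_nonneg (x1 + x2)),
               mul_nonneg (by linarith : (0:ℝ) ≤ 1 + S) (sq_nonneg (x1 - x2))]
  linarith [e1, e2, e3, e4, e5, e6, e7, sq_nonneg x0, sq_nonneg x1, sq_nonneg x2,
    sq_nonneg x3, sq_nonneg x4, sq_nonneg x5,
    mul_nonneg hR (sq_nonneg x1), mul_nonneg hR (sq_nonneg x3), mul_nonneg hR (sq_nonneg x5)]

/-- Combining: with `ε = 1/(250+10R)` the Lyapunov derivative is strictly dissipative. -/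
lemma final_coeff (ε R x0 x1 x2 x3 x4 x5 : ℝ) (hR : 0 ≤ R)
    (hε : ε * (250 + 10*R) = 1) (hεpos : 0 < ε) :
    (-5*x1^2 - 20*x3^2 - 1.6*x5^2)
    + 2*ε*(-(1/4)*(x0^2+x2^2+x4^2) + (8+R)*x1^2 + (102+R)*x3^2 + (2+2*R)*x5^2)
    ≤ -(ε/2)*(x0^2+x1^2+x2^2+x3^2+x4^2+x5^2) := by
  have hA : ε * (16.5 + 2*R) ≤ 1 := by nlinarith [mul_nonneg hεpos.le hR]
  have hB : ε * (204.5 + 2*R) ≤ 1 := by nlinarith [mul_nonneg hεpos.le hR]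
  have hC : ε * (4.5 + 4*R) ≤ 1 := by nlinarith [mul_nonneg hεpos.le hR]
  linarith [mul_nonneg (by linarith : (0:ℝ) ≤ 1 - ε*(16.5+2*R)) (sq_nonneg x1),
    mul_nonneg (by linarith : (0:ℝ) ≤ 1 - ε*(204.5+2*R)) (sq_nonneg x3),
    mul_nonneg (by linarith : (0:ℝ) ≤ 1 - ε*(4.5+4*R)) (sq_nonneg x5),
    sq_nonneg x1, sq_nonneg x3, sq_nonneg x5]

/-- Norm squared in coordinates. -/
lemma normsq (y : EuclideanSpace ℝ (Fin 6)) :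
    ‖y‖^2 = (y 0)^2+(y 1)^2+(y 2)^2+(y 3)^2+(y 4)^2+(y 5)^2 := by
  have h : ‖y‖ = Real.sqrt ((y 0)^2+(y 1)^2+(y 2)^2+(y 3)^2+(y 4)^2+(y 5)^2) := by
    rw [EuclideanSpace.norm_eq]
    congr 1
    rw [Fin.sum_univ_six]
    simp [Real.norm_eq_abs, sq_abs]
  rw [h, Real.sq_sqrt]
  positivity

end helpers

section derivs

variable {x : ℝ → EuclideanSpace ℝ (Fin 6)}

lemma component_deriv (hx : ∀ t ≥ (0:ℝ), HasDerivAt x (quadrotorField (x t)) t)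
    (i : Fin 6) : ∀ t ≥ (0:ℝ), HasDerivAt (fun s => x s i) (quadrotorField (x t) i) t :=
  fun t ht => by
    exact (EuclideanSpace.proj i).hasFDerivAt.comp_hasDerivAt t (hx t ht)

lemma E_deriv (hx : ∀ t ≥ (0:ℝ), HasDerivAt x (quadrotorField (x t)) t) :
    ∀ t ≥ (0:ℝ), HasDerivAt
      (fun s => (x s 0)^2+(x s 1)^2+(x s 2)^2+(x s 3)^2+(x s 4)^2+(x s 5)^2)
      (-5*(x t 1)^2 - 20*(x t 3)^2 - 1.6*(x t 5)^2) t := by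
  intro t ht
  have h0 := component_deriv hx 0 t ht
  have h1 := component_deriv hx 1 t ht
  have h2 := component_deriv hx 2 t ht
  have h3 := component_deriv hx 3 t ht
  have h4 := component_deriv hx 4 t ht
  have h5 := component_deriv hx 5 t ht
  have key := (((((h0.pow 2).add (h1.pow 2)).add (h2.pow 2)).add (h3.pow 2)).add
    (h4.pow 2)).add (h5.pow 2)
  refine key.congr_deriv ?_
  rw [quadField0, quadField1, quadField2, quadField3, quadField4, quadField5]
  ring

lemma C_deriv (hx : ∀ t ≥ (0:ℝ), HasDerivAt x (quadrotorField (x t)) t) :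
    ∀ t ≥ (0:ℝ), HasDerivAt
      (fun s => x s 0 * x s 1 + x s 2 * x s 3 + x s 4 * x s 5)
      ((x t 1)^2
        + x t 0*(-1.5*(x t 3)*(x t 5) - 0.5*(x t 3)*(Real.sin (x t 1)*Real.cos (x t 3))
            - x t 0 - 2.5*(x t 1))
        + (x t 3)^2
        + x t 2*(1.5*(x t 1)*(x t 5) + 0.5*(x t 1)*(Real.sin (x t 1)*Real.cos (x t 3))
            - x t 2 - 10*(x t 3))
        + (x t 5)^2 + x t 4*(-(x t 4) - 0.8*(x t 5))) t := by
  intro t ht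
  have h0 := component_deriv hx 0 t ht
  have h1 := component_deriv hx 1 t ht
  have h2 := component_deriv hx 2 t ht
  have h3 := component_deriv hx 3 t ht
  have h4 := component_deriv hx 4 t ht
  have h5 := component_deriv hx 5 t ht
  have key := ((h0.mul h1).add (h2.mul h3)).add (h4.mul h5)
  refine key.congr_deriv ?_
  rw [quadField0, quadField1, quadField2, quadField3, quadField4, quadField5]
  ring

end derivs

/-- The origin is a globally asymptotically stable equilibrium of the closed-loop
quadrotor angular dynamics: the origin is stable, and every solution converges to the
origin as `t → ∞`. -/
theorem quadrotor_globally_asymptotically_stable :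
    (∀ ε > (0 : ℝ), ∃ δ > (0 : ℝ), ∀ x : ℝ → EuclideanSpace ℝ (Fin 6),
      (∀ t ≥ (0:ℝ), HasDerivAt x (quadrotorField (x t)) t) → ‖x 0‖ < δ →
        ∀ t ≥ (0:ℝ), ‖x t‖ < ε) ∧
    (∀ x : ℝ → EuclideanSpace ℝ (Fin 6),
      (∀ t ≥ (0:ℝ), HasDerivAt x (quadrotorField (x t)) t) →
        Filter.Tendsto x Filter.atTop (nhds 0)) := by
  constructor
  · -- Stability
    intro ε hε
    refine ⟨ε, hε, ?_⟩
    intro x hx hx0 t ht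
    have hEle := decay_of_deriv_nonpos (E_deriv hx)
      (fun t ht => by nlinarith [sq_nonneg (x t 1), sq_nonneg (x t 3), sq_nonneg (x t 5)]) t ht
    have h1 : ‖x t‖^2 ≤ ‖x 0‖^2 := by rw [normsq, normsq]; exact hEle
    nlinarith [norm_nonneg (x t), norm_nonneg (x 0)]
  · -- Convergence
    intro x hx
    obtain ⟨E, hEdef⟩ : ∃ E : ℝ → ℝ, E =
        fun t => (x t 0)^2+(x t 1)^2+(x t 2)^2+(x t 3)^2+(x t 4)^2+(x t 5)^2 := ⟨_, rfl⟩
    obtain ⟨C, hCdef⟩ : ∃ C : ℝ → ℝ, C =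
        fun t => x t 0 * x t 1 + x t 2 * x t 3 + x t 4 * x t 5 := ⟨_, rfl⟩
    have hEsum : ∀ t, E t = (x t 0)^2+(x t 1)^2+(x t 2)^2+(x t 3)^2+(x t 4)^2+(x t 5)^2 :=
      fun t => by rw [hEdef]
    have hCsum : ∀ t, C t = x t 0 * x t 1 + x t 2 * x t 3 + x t 4 * x t 5 :=
      fun t => by rw [hCdef]
    have hEnn : ∀ t, 0 ≤ E t := fun t => by rw [hEsum]; positivity
    have hEd2 : ∀ t ≥ (0:ℝ), HasDerivAt E
        (-5*(x t 1)^2 - 20*(x t 3)^2 - 1.6*(x t 5)^2) t := by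
      rw [hEdef]; exact E_deriv hx
    have hCd2 : ∀ t ≥ (0:ℝ), HasDerivAt C
        ((x t 1)^2
          + x t 0*(-1.5*(x t 3)*(x t 5) - 0.5*(x t 3)*(Real.sin (x t 1)*Real.cos (x t 3))
              - x t 0 - 2.5*(x t 1))
          + (x t 3)^2
          + x t 2*(1.5*(x t 1)*(x t 5) + 0.5*(x t 1)*(Real.sin (x t 1)*Real.cos (x t 3))
              - x t 2 - 10*(x t 3))
          + (x t 5)^2 + x t 4*(-(x t 4) - 0.8*(x t 5))) t := by
      rw [hCdef]; exact C_deriv hx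
    have hnormE : ∀ t, ‖x t‖^2 = E t := fun t => by rw [hEsum, normsq]
    clear hEdef hCdef
    have hEle : ∀ t ≥ (0:ℝ), E t ≤ E 0 := decay_of_deriv_nonpos hEd2
      (fun t ht => by nlinarith [sq_nonneg (x t 1), sq_nonneg (x t 3), sq_nonneg (x t 5)])
    obtain ⟨R, hRdef⟩ : ∃ R : ℝ, R = Real.sqrt (E 0) := ⟨_, rfl⟩
    have hRnn : 0 ≤ R := hRdef ▸ Real.sqrt_nonneg _
    have habs0 : ∀ t ≥ (0:ℝ), |x t 0| ≤ R := by
      intro t ht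
      rw [← Real.sqrt_sq_eq_abs, hRdef]
      apply Real.sqrt_le_sqrt
      have h1 := hEle t ht
      have h2 := hEsum t
      nlinarith [sq_nonneg (x t 1), sq_nonneg (x t 2), sq_nonneg (x t 3),
        sq_nonneg (x t 4), sq_nonneg (x t 5)]
    have habs2 : ∀ t ≥ (0:ℝ), |x t 2| ≤ R := by
      intro t ht
      rw [← Real.sqrt_sq_eq_abs, hRdef]
      apply Real.sqrt_le_sqrt
      have h1 := hEle t ht
      have h2 := hEsum t
      nlinarith [sq_nonneg (x t 1), sq_nonneg (x t 0), sq_nonneg (x t 3),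
        sq_nonneg (x t 4), sq_nonneg (x t 5)]
    clear hRdef
    obtain ⟨ε0, hε0def⟩ : ∃ e : ℝ, e = 1/(250+10*R) := ⟨_, rfl⟩
    have hden : (0:ℝ) < 250+10*R := by linarith
    have hε0pos : 0 < ε0 := by rw [hε0def]; positivity
    have hε0eq : ε0*(250+10*R) = 1 := by rw [hε0def]; field_simp
    have hε0le : ε0 ≤ 1/2 := by
      rw [hε0def, div_le_div_iff₀ hden (by norm_num)]; linarith
    clear hε0def
    obtain ⟨W, hWdef⟩ : ∃ W : ℝ → ℝ, W = fun t => E t + 2*ε0*(C t) := ⟨_, rfl⟩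
    have hWsum : ∀ t, W t = E t + 2*ε0*(C t) := fun t => by rw [hWdef]
    have hWd : ∀ t ≥ (0:ℝ), HasDerivAt W
        ((-5*(x t 1)^2 - 20*(x t 3)^2 - 1.6*(x t 5)^2)
          + 2*ε0*((x t 1)^2
            + x t 0*(-1.5*(x t 3)*(x t 5) - 0.5*(x t 3)*(Real.sin (x t 1)*Real.cos (x t 3))
                - x t 0 - 2.5*(x t 1))
            + (x t 3)^2
            + x t 2*(1.5*(x t 1)*(x t 5) + 0.5*(x t 1)*(Real.sin (x t 1)*Real.cos (x t 3))
                - x t 2 - 10*(x t 3))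
            + (x t 5)^2 + x t 4*(-(x t 4) - 0.8*(x t 5)))) t := by
      intro t ht
      rw [hWdef]
      exact (hEd2 t ht).add ((hCd2 t ht).const_mul (2*ε0))
    clear hWdef
    have h2CE : ∀ t, 2*C t ≤ E t ∧ -(E t) ≤ 2*C t := by
      intro t
      rw [hCsum, hEsum]
      constructor
      · nlinarith [sq_nonneg (x t 0 - x t 1), sq_nonneg (x t 2 - x t 3), sq_nonneg (x t 4 - x t 5)]
      · nlinarith [sq_nonneg (x t 0 + x t 1), sq_nonneg (x t 2 + x t 3), sq_nonneg (x t 4 + x t 5)]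
    have hWle2E : ∀ t, W t ≤ 2*E t := by
      intro t
      have h1 := (h2CE t).1
      have h2 : ε0*(2*C t) ≤ ε0*(E t) := mul_le_mul_of_nonneg_left h1 hε0pos.le
      have h3 : ε0*E t ≤ E t := by nlinarith [hEnn t]
      have h4 := hWsum t
      linarith
    have hWgeE2 : ∀ t, (1/2)*E t ≤ W t := by
      intro t
      have h1 := (h2CE t).2
      have h2 : ε0*(-(E t)) ≤ ε0*(2*C t) := mul_le_mul_of_nonneg_left h1 hε0pos.le
      have h3 : ε0*E t ≤ (1/2) * E t := by nlinarith [hEnn t]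
      have h4 := hWsum t
      linarith
    have hWineq : ∀ t ≥ (0:ℝ), (-5*(x t 1)^2 - 20*(x t 3)^2 - 1.6*(x t 5)^2)
          + 2*ε0*((x t 1)^2
            + x t 0*(-1.5*(x t 3)*(x t 5) - 0.5*(x t 3)*(Real.sin (x t 1)*Real.cos (x t 3))
                - x t 0 - 2.5*(x t 1))
            + (x t 3)^2
            + x t 2*(1.5*(x t 1)*(x t 5) + 0.5*(x t 1)*(Real.sin (x t 1)*Real.cos (x t 3))
                - x t 2 - 10*(x t 3))
            + (x t 5)^2 + x t 4*(-(x t 4) - 0.8*(x t 5)))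
        ≤ -(ε0/4) * W t := by
      intro t ht
      have hS : |Real.sin (x t 1) * Real.cos (x t 3)| ≤ 1 := by
        rw [abs_mul]
        exact mul_le_one₀ (Real.abs_sin_le_one _) (abs_nonneg _) (Real.abs_cos_le_one _)
      have hQ := cross_bound R (x t 0) (x t 1) (x t 2) (x t 3) (x t 4) (x t 5)
        (Real.sin (x t 1) * Real.cos (x t 3)) (habs0 t ht) (habs2 t ht) hS
      have hQ2 : 2*ε0*((x t 1)^2
            + x t 0*(-1.5*(x t 3)*(x t 5) - 0.5*(x t 3)*(Real.sin (x t 1)*Real.cos (x t 3))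
                - x t 0 - 2.5*(x t 1))
            + (x t 3)^2
            + x t 2*(1.5*(x t 1)*(x t 5) + 0.5*(x t 1)*(Real.sin (x t 1)*Real.cos (x t 3))
                - x t 2 - 10*(x t 3))
            + (x t 5)^2 + x t 4*(-(x t 4) - 0.8*(x t 5)))
          ≤ 2*ε0*(-(1/4)*((x t 0)^2+(x t 2)^2+(x t 4)^2) + (8+R)*(x t 1)^2
              + (102+R)*(x t 3)^2 + (2+2*R)*(x t 5)^2) := by
        apply mul_le_mul_of_nonneg_left _ (by positivity)
        convert hQ using 2 <;> ring
      have hF := final_coeff ε0 R (x t 0) (x t 1) (x t 2) (x t 3) (x t 4) (x t 5)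
        hRnn hε0eq hε0pos
      have hE2W : -(ε0/2)*((x t 0)^2+(x t 1)^2+(x t 2)^2+(x t 3)^2+(x t 4)^2+(x t 5)^2)
          ≤ -(ε0/4)*W t := by
        have h1 := hWle2E t
        have h2 : (ε0/4)*W t ≤ (ε0/4)*(2*E t) := mul_le_mul_of_nonneg_left h1 (by positivity)
        have h4 : (ε0/4)*(2*E t)
            = (ε0/2)*((x t 0)^2+(x t 1)^2+(x t 2)^2+(x t 3)^2+(x t 4)^2+(x t 5)^2) := by
          rw [hEsum t]; ring
        linarith
      linarith
    have hWexp := exp_decay (k := ε0/4) hWd (fun t ht => by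
      have := hWineq t ht; linarith)
    have hEbound : ∀ t ≥ (0:ℝ), E t ≤ 2*W 0 * Real.exp (-(ε0/4) * t) := by
      intro t ht
      have h1 := hWexp t ht
      have h2 := hWgeE2 t
      nlinarith [Real.exp_nonneg (-(ε0/4) * t)]
    have hexp0 : Filter.Tendsto (fun t => 2*W 0 * Real.exp (-(ε0/4) * t))
        Filter.atTop (nhds 0) := by
      have h1 : Filter.Tendsto (fun t : ℝ => -(ε0/4) * t) Filter.atTop Filter.atBot :=
        Filter.Tendsto.const_mul_atTop_of_neg (by linarith : -(ε0/4) < 0) Filter.tendsto_id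
      have h2 := Real.tendsto_exp_atBot.comp h1
      have h3 := h2.const_mul (2 * W 0)
      rw [mul_zero] at h3
      exact h3
    have hEtends : Filter.Tendsto E Filter.atTop (nhds 0) := by
      apply squeeze_zero' ?_ ?_ hexp0
      · exact Filter.eventually_atTop.mpr ⟨0, fun t _ => hEnn t⟩
      · exact Filter.eventually_atTop.mpr ⟨0, fun t ht => hEbound t ht⟩
    rw [tendsto_zero_iff_norm_tendsto_zero]
    have hfun : (fun t => ‖x t‖) = fun t => Real.sqrt (E t) := by
      funext t
      rw [← Real.sqrt_sq (norm_nonneg (x t)), hnormE]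
    rw [hfun]
    have h9 := (Real.continuous_sqrt.tendsto 0).comp hEtends
    rw [Real.sqrt_zero] at h9
    exact h9
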